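/- Let G be a group that is generalized quasi-dihedral on an abelian subgroup K and an element b, and let H be a subgroup of G. Then H is either abelian or generalized quasi-dihedral; more precisely, if H is not contained in K, then H ∩ K has index 2 in H and there exists an element x ∈ H ∖ K of finite order such that x·k·x⁻¹ = k⁻¹ for every k ∈ H ∩ K, so H is generalized quasi-dihedral on H ∩ K and x. -/

import Mathlib

/-- `G` is generalized quasi-dihedral on the abelian subgroup `K` and the element `b`:
`K` is abelian of index 2, `b ∉ K`, `b` has finite order, and conjugation by `b`
inverts every element of `K`. -/
def IsGQD {G : Type*} [Group G] (K : Subgroup G) (b : G) : Prop :=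
  (∀ x ∈ K, ∀ y ∈ K, x * y = y * x) ∧
  K.index = 2 ∧ b ∉ K ∧ IsOfFinOrder b ∧
  ∀ k ∈ K, b * k * b⁻¹ = k⁻¹

/-- Every subgroup of a generalized quasi-dihedral group is abelian or generalized
quasi-dihedral: if `H ≤ K` then `H` is abelian, and otherwise `H ∩ K` has index 2
in `H` and some finite-order `x ∈ H ∖ K` inverts `H ∩ K` by conjugation, i.e. `H`
is generalized quasi-dihedral on `H ⊓ K` and `x`. -/
theorem gqd_subgroup_dichotomy {G : Type*} [Group G] (K : Subgroup G) (b : G)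
    (hGQD : IsGQD K b) (H : Subgroup G) :
    (H ≤ K → ∀ x ∈ H, ∀ y ∈ H, x * y = y * x) ∧
    (¬ H ≤ K → K.relIndex H = 2 ∧
      ∃ x : G, x ∈ H ∧ x ∉ K ∧ IsOfFinOrder x ∧
        ∀ k ∈ H ⊓ K, x * k * x⁻¹ = k⁻¹) := by
  obtain ⟨hab, hidx, hbK, hbord, hinv⟩ := hGQD
  constructor
  · intro hHK x hx y hy
    exact hab x (hHK hx) y (hHK hy)
  · intro hHK
    obtain ⟨x, hxH, hxK⟩ := SetLike.not_le_iff_exists.mp hHK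
    -- x inverts all of K
    have hxc : b⁻¹ * x ∈ K := by
      rw [Subgroup.mul_mem_iff_of_index_two hidx]
      simp [hbK, hxK]
    have hxinv : ∀ k ∈ K, x * k * x⁻¹ = k⁻¹ := by
      intro k hk
      have hx' : x = b * (b⁻¹ * x) := by group
      calc x * k * x⁻¹ = b * ((b⁻¹ * x) * k * (b⁻¹ * x)⁻¹) * b⁻¹ := by
            rw [hx']; group
        _ = b * k * b⁻¹ := by
            rw [hab _ hxc _ hk]; group
        _ = k⁻¹ := hinv k hk
    -- x has finite order: x^4 = 1
    have hx2 : x * x ∈ K := Subgroup.mul_self_mem_of_index_two hidx x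
    have h1 : x * x = (x * x)⁻¹ := by
      rw [← hxinv _ hx2]; group
    have hx4 : x ^ 4 = 1 := by
      have h2 : x ^ 4 = (x * x) * (x * x) := by
        rw [show (4 : ℕ) = 2 * 2 from rfl, pow_mul, pow_two, pow_two]
      rw [h2]; nth_rewrite 2 [h1]; exact mul_inv_cancel (x * x)
    have hxfin : IsOfFinOrder x :=
      isOfFinOrder_iff_pow_eq_one.mpr ⟨4, by norm_num, hx4⟩
    -- K is normal (index 2)
    have hnorm : K.Normal := by
      constructor
      intro n hn g
      by_cases hg : g ∈ K
      · exact K.mul_mem (K.mul_mem hg hn) (K.inv_mem hg)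
      · have h1 : g * n ∉ K := by
          rw [Subgroup.mul_mem_iff_of_index_two hidx]
          simp [hg, hn]
        rw [Subgroup.mul_mem_iff_of_index_two hidx]
        simp [h1, hg]
    have hrel : K.relIndex H = 2 := by
      have hdvd : K.relIndex H ∣ K.index := Subgroup.relIndex_dvd_index_of_normal K H
      rw [hidx] at hdvd
      rcases (Nat.dvd_prime Nat.prime_two).mp hdvd with h | h
      · exact absurd (Subgroup.relIndex_eq_one.mp h hxH) hxK
      · exact h
    exact ⟨hrel, x, hxH, hxK, hxfin, fun k hk => hxinv k hk.2⟩
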